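/- arXiv:1904.05269 — 6 statements merged into one kernel-verified Lean document; each statement's English description precedes it below -/
import Mathlib

section
/- Every BFS-layering of a connected chordal graph is shadow-complete. -/
open SimpleGraph

section helpers
variable {V : Type*} {G : SimpleGraph V}

lemma edge_mem_of_length_eq_one {u w : V} (q : G.Walk u w) (h : q.length = 1) :
    s(u, w) ∈ q.edges := by
  cases q with
  | nil => simp at h
  | @cons _ v _ h' q' =>
    have hv : v = w := SimpleGraph.Walk.eq_of_length_eq_zero (by simpa using h)
    subst hv
    simp

lemma min_walk_chord {a b : V} (p : G.Walk a b)
    (hmin : ∀ q : G.Walk a b, p.length ≤ q.length) {u w : V}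
    (hu : u ∈ p.support) (hw : w ∈ p.support) (h : G.Adj u w) : s(u, w) ∈ p.edges := by
  classical
  by_contra hne
  have huw : u ≠ w := h.ne
  rw [← p.take_spec hu, Walk.mem_support_append_iff] at hw
  have hsplit : (p.takeUntil u hu).length + (p.dropUntil u hu).length = p.length := by
    have := congrArg Walk.length (p.take_spec hu)
    rwa [Walk.length_append] at this
  rcases hw with hw | hw
  · set q := p.takeUntil u hu with hq
    have h0 : (q.dropUntil w hw).length ≠ 0 := fun hz =>
      huw ((Walk.eq_of_length_eq_zero hz).symm)
    have h1 : (q.dropUntil w hw).length ≠ 1 := by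
      intro h1
      have hm := edge_mem_of_length_eq_one _ h1
      have hm2 := q.edges_dropUntil_subset hw hm
      have hm3 := p.edges_takeUntil_subset hu hm2
      rw [Sym2.eq_swap] at hm3
      exact hne hm3
    have hsplit2 : (q.takeUntil w hw).length + (q.dropUntil w hw).length = q.length := by
      have := congrArg Walk.length (q.take_spec hw)
      rwa [Walk.length_append] at this
    have hle := hmin ((q.takeUntil w hw).append (Walk.cons h.symm (p.dropUntil u hu)))
    rw [Walk.length_append, Walk.length_cons] at hle
    omega
  · set q := p.dropUntil u hu with hq
    have h0 : (q.takeUntil w hw).length ≠ 0 := fun hz =>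
      huw (Walk.eq_of_length_eq_zero hz)
    have h1 : (q.takeUntil w hw).length ≠ 1 := by
      intro h1
      have hm := edge_mem_of_length_eq_one _ h1
      have hm2 := q.edges_takeUntil_subset hw hm
      have hm3 := p.edges_dropUntil_subset hu hm2
      exact hne hm3
    have hsplit2 : (q.takeUntil w hw).length + (q.dropUntil w hw).length = q.length := by
      have := congrArg Walk.length (q.take_spec hw)
      rwa [Walk.length_append] at this
    have hle := hmin ((p.takeUntil u hu).append (Walk.cons h (q.dropUntil w hw)))
    rw [Walk.length_append, Walk.length_cons] at hle
    omega

lemma induced_min_walk_chord {S : Set V} {a b : S}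
    (p : (G.induce S).Walk a b)
    (hmin : ∀ q : (G.induce S).Walk a b, p.length ≤ q.length) {u w : V}
    (hu : u ∈ (p.map (SimpleGraph.Embedding.induce S).toHom).support)
    (hw : w ∈ (p.map (SimpleGraph.Embedding.induce S).toHom).support)
    (h : G.Adj u w) : s(u, w) ∈ (p.map (SimpleGraph.Embedding.induce S).toHom).edges := by
  rw [Walk.support_map, List.mem_map] at hu hw
  obtain ⟨u', hu', rfl⟩ := hu
  obtain ⟨w', hw', rfl⟩ := hw
  have hadj : (G.induce S).Adj u' w' := h
  have := min_walk_chord p hmin hu' hw' hadj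
  rw [Walk.edges_map]
  exact List.mem_map_of_mem this

end helpers

/-- A graph is *chordal* if every cycle of length at least `4` has a chord: two vertices
of the cycle that are adjacent in the graph but not along an edge of the cycle. -/
def SimpleGraph.IsChordal {V : Type*} (G : SimpleGraph V) : Prop :=
  ∀ ⦃v : V⦄ (c : G.Walk v v), c.IsCycle → 4 ≤ c.length →
    ∃ u w : V, u ∈ c.support ∧ w ∈ c.support ∧ G.Adj u w ∧ s(u, w) ∉ c.edges

/-- **Lemma (Kündgen–Pelsmajer; Dujmović–Morin–Wood).** Every BFS-layering of a connected
chordal graph is shadow-complete: for every `i ≥ 1` and every connected component `C` of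
the subgraph induced by the vertices at distance at least `i` from the root `r`, the
shadow of `C` (the set of vertices at distance `i - 1` from `r` adjacent to some vertex
of `C`) is a clique. -/
theorem bfs_layering_shadow_complete (V : Type) [Fintype V] (G : SimpleGraph V)
    (hconn : G.Connected) (hchord : G.IsChordal) (r : V) (i : ℕ) (hi : 1 ≤ i)
    (C : (G.induce {v : V | i ≤ G.dist r v}).ConnectedComponent) :
    G.IsClique {u : V | G.dist r u = i - 1 ∧
      ∃ v : {v : V | i ≤ G.dist r v},
        (G.induce {v : V | i ≤ G.dist r v}).connectedComponentMk v = C ∧ G.Adj u ↑v} := by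
  classical
  intro x hx y hy hxy
  simp only [Set.mem_setOf_eq] at hx hy
  obtain ⟨hdx, vx, hCx, hax⟩ := hx
  obtain ⟨hdy, vy, hCy, hay⟩ := hy
  by_contra hadj
  set d := i - 1 with hd
  have hd1 : 1 ≤ d := by
    by_contra h0
    have hx0 : r = x := hconn.dist_eq_zero_iff.mp (by omega)
    have hy0 : r = y := hconn.dist_eq_zero_iff.mp (by omega)
    exact hxy (hx0 ▸ hy0 ▸ rfl)
  have hi' : i = d + 1 := by omega
  -- the two vertex sets
  set S1 : Set V := {v | G.dist r v < d} ∪ {x, y} with hS1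
  set S2 : Set V := {v : V | i ≤ G.dist r v} ∪ {x, y} with hS2
  have hxS1 : x ∈ S1 := Or.inr (by simp)
  have hyS1 : y ∈ S1 := Or.inr (by simp)
  have hxS2 : x ∈ S2 := Or.inr (by simp)
  have hyS2 : y ∈ S2 := Or.inr (by simp)
  have hinter : ∀ v : V, v ∈ S1 → v ∈ S2 → v = x ∨ v = y := by
    intro v h1 h2
    rcases h1 with h1 | h1
    · rcases h2 with h2 | h2
      · simp only [Set.mem_setOf_eq] at h1 h2; omega
      · simpa using h2
    · simpa using h1
  -- going one step down in distance
  have step : ∀ v : V, G.dist r v ≠ 0 → ∃ u, G.Adj u v ∧ G.dist r u + 1 = G.dist r v := by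
    intro v hv
    obtain ⟨p, hlen⟩ := (hconn v r).exists_walk_length_eq_dist
    cases p with
    | nil =>
      exfalso; apply hv; simp
    | @cons _ u' _ h q =>
      refine ⟨u', h.symm, ?_⟩
      have h1 : G.dist r u' ≤ q.length := by
        rw [SimpleGraph.dist_comm]; exact SimpleGraph.dist_le q
      have hd1' : G.dist u' v ≤ 1 := by
        simpa using SimpleGraph.dist_le (Walk.cons h.symm Walk.nil)
      have h2 : G.dist r v ≤ G.dist r u' + G.dist u' v := hconn.dist_triangle
      have h3 : G.dist v r = q.length + 1 := by simpa [Walk.length_cons] using hlen.symm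
      rw [SimpleGraph.dist_comm] at h3
      omega
  have hrS1 : r ∈ S1 := Or.inl (by simp only [Set.mem_setOf_eq, SimpleGraph.dist_self]; omega)
  -- reachability within S1
  have reach1 : ∀ (n : ℕ) (v : V) (hv : G.dist r v < d), G.dist r v = n →
      (G.induce S1).Reachable ⟨v, Or.inl hv⟩ ⟨r, hrS1⟩ := by
    intro n
    induction n with
    | zero =>
      intro v hv h0
      have : r = v := hconn.dist_eq_zero_iff.mp h0
      subst this
      exact Reachable.refl _
    | succ n ih =>
      intro v hv hn
      obtain ⟨u, hadj', hdu⟩ := step v (by omega)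
      have hu : G.dist r u < d := by omega
      have hA : (G.induce S1).Adj ⟨v, Or.inl hv⟩ ⟨u, Or.inl hu⟩ := hadj'.symm
      exact hA.reachable.trans (ih u hu (by omega))
  have reachxr : (G.induce S1).Reachable ⟨x, hxS1⟩ ⟨r, hrS1⟩ := by
    obtain ⟨u, hadj', hdu⟩ := step x (by omega)
    have hu : G.dist r u < d := by omega
    have hA : (G.induce S1).Adj ⟨x, hxS1⟩ ⟨u, Or.inl hu⟩ := hadj'.symm
    exact hA.reachable.trans (reach1 _ u hu rfl)
  have reachyr : (G.induce S1).Reachable ⟨y, hyS1⟩ ⟨r, hrS1⟩ := by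
    obtain ⟨u, hadj', hdu⟩ := step y (by omega)
    have hu : G.dist r u < d := by omega
    have hA : (G.induce S1).Adj ⟨y, hyS1⟩ ⟨u, Or.inl hu⟩ := hadj'.symm
    exact hA.reachable.trans (reach1 _ u hu rfl)
  have reach_xy1 : (G.induce S1).Reachable ⟨x, hxS1⟩ ⟨y, hyS1⟩ :=
    reachxr.trans reachyr.symm
  -- reachability within S2
  have hAsub : {v : V | i ≤ G.dist r v} ⊆ S2 := fun v hv => Or.inl hv
  have hreachA : (G.induce {v : V | i ≤ G.dist r v}).Reachable vx vy :=
    SimpleGraph.ConnectedComponent.exact (hCx.trans hCy.symm)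
  have hvxS2 : (vx : V) ∈ S2 := Or.inl vx.2
  have hvyS2 : (vy : V) ∈ S2 := Or.inl vy.2
  have hmap : (G.induce S2).Reachable ⟨(vx : V), hvxS2⟩ ⟨(vy : V), hvyS2⟩ :=
    hreachA.map (G.induceHomOfLE hAsub).toHom
  have hadjxvx : (G.induce S2).Adj ⟨x, hxS2⟩ ⟨(vx : V), hvxS2⟩ := hax
  have hadjyvy : (G.induce S2).Adj ⟨y, hyS2⟩ ⟨(vy : V), hvyS2⟩ := hay
  have reach_xy2 : (G.induce S2).Reachable ⟨x, hxS2⟩ ⟨y, hyS2⟩ :=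
    (hadjxvx.reachable.trans hmap).trans hadjyvy.reachable.symm
  -- take geodesics
  obtain ⟨p1, hp1len⟩ := reach_xy1.exists_walk_length_eq_dist
  obtain ⟨p2, hp2len⟩ := reach_xy2.exists_walk_length_eq_dist
  have hmin1 : ∀ q : (G.induce S1).Walk ⟨x, hxS1⟩ ⟨y, hyS1⟩, p1.length ≤ q.length := by
    intro q; rw [hp1len]; exact SimpleGraph.dist_le q
  have hmin2 : ∀ q : (G.induce S2).Walk ⟨x, hxS2⟩ ⟨y, hyS2⟩, p2.length ≤ q.length := by
    intro q; rw [hp2len]; exact SimpleGraph.dist_le q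
  have hp1path : p1.IsPath := p1.isPath_of_length_eq_dist hp1len
  have hp2path : p2.IsPath := p2.isPath_of_length_eq_dist hp2len
  set q1 : G.Walk x y := p1.map (SimpleGraph.Embedding.induce S1).toHom with hq1
  set q2 : G.Walk x y := p2.map (SimpleGraph.Embedding.induce S2).toHom with hq2
  have hq1path : q1.IsPath := Walk.map_isPath_of_injective Subtype.val_injective hp1path
  have hq2path : q2.IsPath := Walk.map_isPath_of_injective Subtype.val_injective hp2path
  have hsupp1 : ∀ v ∈ q1.support, v ∈ S1 := by
    intro v hv
    have hv0 : v ∈ (p1.map (SimpleGraph.Embedding.induce S1).toHom).support := hv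
    rw [Walk.support_map, List.mem_map] at hv0
    obtain ⟨⟨v', hv'⟩, _, rfl⟩ := hv0
    exact hv'
  have hsupp2 : ∀ v ∈ q2.support, v ∈ S2 := by
    intro v hv
    have hv0 : v ∈ (p2.map (SimpleGraph.Embedding.induce S2).toHom).support := hv
    rw [Walk.support_map, List.mem_map] at hv0
    obtain ⟨⟨v', hv'⟩, _, rfl⟩ := hv0
    exact hv'
  have hlen1 : 2 ≤ q1.length := by
    have h0 : q1.length ≠ 0 := fun h => hxy (Walk.eq_of_length_eq_zero h)
    have h1 : q1.length ≠ 1 := fun h => hadj (Walk.adj_of_length_eq_one h)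
    omega
  have hlen2 : 2 ≤ q2.length := by
    have h0 : q2.length ≠ 0 := fun h => hxy (Walk.eq_of_length_eq_zero h)
    have h1 : q2.length ≠ 1 := fun h => hadj (Walk.adj_of_length_eq_one h)
    omega
  set c : G.Walk x x := q1.append q2.reverse with hc
  have hclen : c.length = q1.length + q2.length := by
    rw [hc, Walk.length_append, Walk.length_reverse]
  -- edge disjointness of the two paths
  have hedis : ∀ e, e ∈ q1.edges → e ∈ q2.edges → False := by
    intro e he1 he2
    induction e using Sym2.ind with
    | _ a b =>
      have hadj' := q1.adj_of_mem_edges he1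
      have ha1 := q1.fst_mem_support_of_mem_edges he1
      have hb1 := q1.snd_mem_support_of_mem_edges he1
      have ha2 := q2.fst_mem_support_of_mem_edges he2
      have hb2 := q2.snd_mem_support_of_mem_edges he2
      rcases hinter a (hsupp1 a ha1) (hsupp2 a ha2) with rfl | rfl <;>
        rcases hinter b (hsupp1 b hb1) (hsupp2 b hb2) with rfl | rfl
      · exact hadj'.ne rfl
      · exact hadj hadj'
      · exact hadj hadj'.symm
      · exact hadj'.ne rfl
  have hcycle : c.IsCycle := by
    rw [Walk.isCycle_def]
    refine ⟨?_, ?_, ?_⟩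
    · rw [Walk.isTrail_def, hc, Walk.edges_append, Walk.edges_reverse, List.nodup_append]
      exact ⟨hq1path.isTrail.edges_nodup, List.nodup_reverse.mpr hq2path.isTrail.edges_nodup,
        fun e he1 e' he2 hee => by subst hee; exact hedis e he1 (List.mem_reverse.mp he2)⟩
    · intro h
      have := hclen
      rw [h] at this
      simp at this
      omega
    · rw [hc, Walk.support_append, List.tail_append_of_ne_nil q1.support_ne_nil]
      have hn1 := hq1path.support_nodup
      rw [q1.support_eq_cons] at hn1
      have hn2 : q2.reverse.support.Nodup := by
        rw [Walk.support_reverse]; exact List.nodup_reverse.mpr hq2path.support_nodup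
      rw [q2.reverse.support_eq_cons] at hn2
      rw [List.nodup_append]
      refine ⟨(List.nodup_cons.mp hn1).2, (List.nodup_cons.mp hn2).2, ?_⟩
      intro v hv1 v'' hv2 hvv; subst hvv
      have hv1' : v ∈ q1.support := by
        rw [q1.support_eq_cons]; exact List.mem_cons_of_mem _ hv1
      have hv2' : v ∈ q2.support := by
        have : v ∈ q2.reverse.support := by
          rw [q2.reverse.support_eq_cons]; exact List.mem_cons_of_mem _ hv2
        rwa [Walk.support_reverse, List.mem_reverse] at this
      rcases hinter v (hsupp1 v hv1') (hsupp2 v hv2') with rfl | rfl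
      · exact (List.nodup_cons.mp hn1).1 hv1
      · exact (List.nodup_cons.mp hn2).1 hv2
  -- apply chordality
  obtain ⟨u, w, hu, hw, huw, hne⟩ := hchord c hcycle (by omega)
  have hmemcase : ∀ z ∈ c.support, z ∈ q1.support ∨ z ∈ q2.support := by
    intro z hz
    rw [hc, Walk.mem_support_append_iff] at hz
    rcases hz with hz | hz
    · exact Or.inl hz
    · right; rwa [Walk.support_reverse, List.mem_reverse] at hz
  have hq1sub : ∀ e ∈ q1.edges, e ∈ c.edges := by
    intro e he; rw [hc, Walk.edges_append]; exact List.mem_append_left _ he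
  have hq2sub : ∀ e ∈ q2.edges, e ∈ c.edges := by
    intro e he
    rw [hc, Walk.edges_append, Walk.edges_reverse]
    exact List.mem_append_right _ (List.mem_reverse.mpr he)
  have final1 : ∀ a b : V, G.Adj a b → a ∈ q1.support → b ∈ q1.support →
      s(a, b) ∈ c.edges := fun a b h ha hb =>
    hq1sub _ (induced_min_walk_chord p1 hmin1 ha hb h)
  have final2 : ∀ a b : V, G.Adj a b → a ∈ q2.support → b ∈ q2.support →
      s(a, b) ∈ c.edges := fun a b h ha hb =>
    hq2sub _ (induced_min_walk_chord p2 hmin2 ha hb h)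
  have hxq1 : x ∈ q1.support := q1.start_mem_support
  have hyq1 : y ∈ q1.support := q1.end_mem_support
  have hxq2 : x ∈ q2.support := q2.start_mem_support
  have hyq2 : y ∈ q2.support := q2.end_mem_support
  -- the mixed case is impossible by the distance layers
  have mixed : ∀ a b : V, G.Adj a b → a ∈ q1.support → b ∈ q2.support →
      s(a, b) ∈ c.edges := by
    intro a b h ha hb
    by_cases haxy : a = x ∨ a = y
    · have ha2 : a ∈ q2.support := by rcases haxy with rfl | rfl; exacts [hxq2, hyq2]
      exact final2 a b h ha2 hb
    · by_cases hbxy : b = x ∨ b = y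
      · have hb1 : b ∈ q1.support := by rcases hbxy with rfl | rfl; exacts [hxq1, hyq1]
        exact final1 a b h ha hb1
      · exfalso
        have haS1 : a ∈ S1 := hsupp1 a ha
        have hbS2 : b ∈ S2 := hsupp2 b hb
        have hda : G.dist r a < d := by
          rcases haS1 with h' | h'
          · exact h'
          · exact absurd (by simpa using h') haxy
        have hdb : i ≤ G.dist r b := by
          rcases hbS2 with h' | h'
          · exact h'
          · exact absurd (by simpa using h') hbxy
        have htri : G.dist r b ≤ G.dist r a + G.dist a b := hconn.dist_triangle
        have h1 : G.dist a b ≤ 1 := by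
          simpa using SimpleGraph.dist_le (Walk.cons h Walk.nil)
        omega
  rcases hmemcase u hu with hu1 | hu2 <;> rcases hmemcase w hw with hw1 | hw2
  · exact hne (final1 u w huw hu1 hw1)
  · exact hne (mixed u w huw hu1 hw2)
  · have := mixed w u huw.symm hw1 hu2
    rw [Sym2.eq_swap] at this
    exact hne this
  · exact hne (final2 u w huw hu2 hw2)
end

section
/- Let H be a graph having an ℓ-colouring φ_2 such that every φ_2-repetitive lazy walk in H is boring. Then for every graph G, π*(G ⊠ H) ≤ ℓ·π*(G). -/
/-- A *lazy walk* in `G` is a sequence of vertices in which any two consecutive vertices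
are equal or adjacent. -/
def SimpleGraph.IsLazyWalk {V : Type*} (G : SimpleGraph V) (l : List V) : Prop :=
  l.Chain' fun a b => a = b ∨ G.Adj a b

/-- A colouring `φ` of `G` is *strongly nonrepetitive* if every `φ`-repetitive lazy walk
`v₀, …, v₂ₖ₋₁` (with `k ≥ 1`, repetitive meaning the first half of the colour sequence
equals the second half) has `vᵢ = vᵢ₊ₖ` for some `i < k`. -/
def SimpleGraph.IsStronglyNonrepetitiveColouring {V α : Type*} (G : SimpleGraph V)
    (φ : V → α) : Prop :=
  ∀ (l : List V) (k : ℕ), G.IsLazyWalk l → 0 < k → l.length = 2 * k →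
    (l.map φ).take k = (l.map φ).drop k → ∃ i < k, l[i]? = l[i + k]?

/-- `π*(G)`: the least `n` such that `G` has a strongly nonrepetitive colouring with
`n` colours. -/
noncomputable def SimpleGraph.strongNonrepChromNum {V : Type*} (G : SimpleGraph V) : ℕ :=
  sInf {n : ℕ | ∃ φ : V → Fin n, G.IsStronglyNonrepetitiveColouring φ}

/-- `φ` is a colouring of `G` all of whose `φ`-repetitive lazy walks `v₀, …, v₂ₖ₋₁` are
*boring*, i.e. satisfy `vᵢ = vᵢ₊ₖ` for all `i < k`. -/
def SimpleGraph.LazyWalksBoring {V α : Type*} (G : SimpleGraph V) (φ : V → α) : Prop :=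
  ∀ (l : List V) (k : ℕ), G.IsLazyWalk l → l.length = 2 * k →
    (l.map φ).take k = (l.map φ).drop k → ∀ i < k, l[i]? = l[i + k]?

/-- The strong product `G ⊠ H`: distinct vertices `(v, x)` and `(w, y)` are adjacent iff
(`v = w` or `vw ∈ E(G)`) and (`x = y` or `xy ∈ E(H)`). -/
def SimpleGraph.strongProd {α β : Type*} (G : SimpleGraph α) (H : SimpleGraph β) :
    SimpleGraph (α × β) where
  Adj x y := x ≠ y ∧ (x.1 = y.1 ∨ G.Adj x.1 y.1) ∧ (x.2 = y.2 ∨ H.Adj x.2 y.2)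
  symm := by
    constructor
    rintro x y ⟨h1, h2, h3⟩
    refine ⟨h1.symm, ?_, ?_⟩
    · rcases h2 with h | h
      exacts [Or.inl h.symm, Or.inr h.symm]
    · rcases h3 with h | h
      exacts [Or.inl h.symm, Or.inr h.symm]
  loopless := by constructor; rintro x ⟨h1, -, -⟩; exact h1 rfl

lemma take_eq_drop_iff_aux {α : Type} (l : List α) (k : ℕ) (h : l.length = 2 * k) :
    l.take k = l.drop k ↔ ∀ i < k, l[i]? = l[i + k]? := by
  constructor
  · intro he i hi
    have := congrArg (fun t => t[i]?) he
    simp only [List.getElem?_take_of_lt hi, List.getElem?_drop] at this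
    rwa [Nat.add_comm] at this
  · intro hp
    apply List.ext_getElem?
    intro i
    rw [List.getElem?_drop]
    by_cases hi : i < k
    · rw [List.getElem?_take_of_lt hi, hp i hi, Nat.add_comm]
    · rw [List.getElem?_take_eq_none (by omega), List.getElem?_eq_none (by omega)]

lemma exists_snc {V : Type} [Fintype V] (G : SimpleGraph V) :
    ∃ φ : V → Fin G.strongNonrepChromNum, G.IsStronglyNonrepetitiveColouring φ := by
  have hne : {n : ℕ | ∃ φ : V → Fin n, G.IsStronglyNonrepetitiveColouring φ}.Nonempty := by
    classical
    refine ⟨Fintype.card V, (Fintype.equivFin V).toFun, ?_⟩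
    intro l k hw hk hlen hcol
    refine ⟨0, hk, ?_⟩
    have h0 : (0 : ℕ) < k := hk
    have := congrArg (fun t => t[0]?) hcol
    simp only [List.getElem?_take_of_lt h0, List.getElem?_drop, Nat.add_zero] at this
    rw [List.getElem?_map, List.getElem?_map] at this
    have h0l : 0 < l.length := by omega
    have hkl : k < l.length := by omega
    have ha : l[0]? = some l[0] := List.getElem?_eq_getElem h0l
    have hb : l[k]? = some l[k] := List.getElem?_eq_getElem hkl
    rw [ha, hb, Option.map_some, Option.map_some] at this
    have heq : l[0] = l[k] := (Fintype.equivFin V).injective (Option.some.inj this)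
    rw [Nat.zero_add, ha, hb, heq]
  exact Nat.sInf_mem hne

/-- **Lemma 6.** Let `H` be a graph with an `ℓ`-colouring `φ₂` such that every
`φ₂`-repetitive lazy walk in `H` is boring. Then for every graph `G`,
`π*(G ⊠ H) ≤ ℓ · π*(G)`. -/
theorem strongNonrepChromNum_strongProd_le (V W : Type) [Fintype V] [Fintype W]
    (G : SimpleGraph V) (H : SimpleGraph W) (ℓ : ℕ) (φ₂ : W → Fin ℓ)
    (hφ₂ : H.LazyWalksBoring φ₂) :
    (G.strongProd H).strongNonrepChromNum ≤ ℓ * G.strongNonrepChromNum := by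
  obtain ⟨φ₁, hφ₁⟩ := exists_snc G
  apply Nat.sInf_le
  refine ⟨fun p => (finProdFinEquiv (φ₂ p.2, φ₁ p.1) : Fin (ℓ * G.strongNonrepChromNum)), ?_⟩
  intro l k hw hk hlen hcol
  -- pointwise colour equality
  have hlenmap : (l.map (fun p => finProdFinEquiv (φ₂ p.2, φ₁ p.1) : V × W → Fin (ℓ * G.strongNonrepChromNum))).length
      = 2 * k := by simp [hlen]
  have hpt := (take_eq_drop_iff_aux _ k hlenmap).1 hcol
  -- elementwise vertex pairs
  have key : ∀ i < k, ∃ a b : V × W, l[i]? = some a ∧ l[i + k]? = some b ∧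
      φ₁ a.1 = φ₁ b.1 ∧ φ₂ a.2 = φ₂ b.2 := by
    intro i hi
    have hil : i < l.length := by omega
    have hikl : i + k < l.length := by omega
    have ha : l[i]? = some l[i] := List.getElem?_eq_getElem hil
    have hb : l[i + k]? = some l[i + k] := List.getElem?_eq_getElem hikl
    have := hpt i hi
    rw [List.getElem?_map, List.getElem?_map, ha, hb] at this
    simp only [Option.map_some] at this
    have he := finProdFinEquiv.injective (Option.some.inj this)
    rw [Prod.mk.injEq] at he
    exact ⟨l[i], l[i + k], ha, hb, he.2, he.1⟩
  -- first projection is a lazy walk in G with repetitive φ₁-colours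
  have hwG : G.IsLazyWalk (l.map Prod.fst) := by
    rw [SimpleGraph.IsLazyWalk, List.Chain', List.isChain_map]
    refine hw.imp ?_
    rintro a b (rfl | ⟨-, h, -⟩)
    · exact Or.inl rfl
    · rcases h with h | h
      exacts [Or.inl h, Or.inr h]
  have hwH : H.IsLazyWalk (l.map Prod.snd) := by
    rw [SimpleGraph.IsLazyWalk, List.Chain', List.isChain_map]
    refine hw.imp ?_
    rintro a b (rfl | ⟨-, -, h⟩)
    · exact Or.inl rfl
    · rcases h with h | h
      exacts [Or.inl h, Or.inr h]
  have hcolG : ((l.map Prod.fst).map φ₁).take k = ((l.map Prod.fst).map φ₁).drop k := by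
    rw [take_eq_drop_iff_aux _ k (by simp [hlen])]
    intro i hi
    obtain ⟨a, b, ha, hb, h1, _⟩ := key i hi
    simp only [List.getElem?_map, ha, hb, Option.map_some]
    rw [h1]
  have hcolH : ((l.map Prod.snd).map φ₂).take k = ((l.map Prod.snd).map φ₂).drop k := by
    rw [take_eq_drop_iff_aux _ k (by simp [hlen])]
    intro i hi
    obtain ⟨a, b, ha, hb, _, h2⟩ := key i hi
    simp only [List.getElem?_map, ha, hb, Option.map_some]
    rw [h2]
  obtain ⟨i, hi, hG⟩ := hφ₁ (l.map Prod.fst) k hwG hk (by simp [hlen]) hcolG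
  have hH := hφ₂ (l.map Prod.snd) k hwH (by simp [hlen]) hcolH i hi
  obtain ⟨a, b, ha, hb, -, -⟩ := key i hi
  rw [List.getElem?_map, List.getElem?_map, ha, hb] at hG hH
  simp only [Option.map_some] at hG hH
  exact ⟨i, hi, by rw [ha, hb, Prod.ext (Option.some.inj hG) (Option.some.inj hH)]⟩
end

section
/- For every graph G and every path P, π*(G ⊠ P) ≤ 4·π*(G). -/
/-- Thue–Morse sequence. -/
def tmw (n : ℕ) : Bool :=
  if h : n = 0 then false else xor (n % 2 == 1) (tmw (n / 2))
decreasing_by exact Nat.div_lt_self (Nat.pos_of_ne_zero h) one_lt_two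

lemma tmw_even (n : ℕ) : tmw (2 * n) = tmw n := by
  rcases Nat.eq_zero_or_pos n with h | h
  · subst h; rfl
  · rw [tmw]
    have h1 : 2 * n ≠ 0 := by omega
    have h2 : 2 * n % 2 = 0 := by omega
    have h3 : 2 * n / 2 = n := by omega
    simp [h1, h2, h3]

lemma tmw_odd (n : ℕ) : tmw (2 * n + 1) = !tmw n := by
  rw [tmw]
  have h2 : (2 * n + 1) % 2 = 1 := by omega
  have h3 : (2 * n + 1) / 2 = n := by omega
  simp [h2, h3, Bool.xor_comm]

lemma tmw_no_triple (p : ℕ) :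
    ¬ (tmw p = tmw (p + 1) ∧ tmw (p + 1) = tmw (p + 2)) := by
  rintro ⟨h1, h2⟩
  rcases Nat.even_or_odd p with ⟨s, hs⟩ | ⟨s, hs⟩
  · have e1 : p = 2 * s := by omega
    rw [e1] at h1
    rw [show 2 * s + 1 = 2 * s + 1 from rfl] at h1
    rw [tmw_even, tmw_odd] at h1
    simp at h1
  · have e1 : p + 1 = 2 * (s + 1) := by omega
    have e2 : p + 2 = 2 * (s + 1) + 1 := by omega
    rw [e2, e1, tmw_even, tmw_odd] at h2
    simp at h2

/-- Thue–Morse is overlap-free. -/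
theorem tmw_no_overlap : ∀ m, 1 ≤ m → ∀ p, ¬ (∀ j ≤ m, tmw (p + j) = tmw (p + j + m)) := by
  intro m
  induction m using Nat.strong_induction_on with
  | _ m IH =>
    intro hm p hE
    rcases eq_or_lt_of_le hm with h1 | h1
    · -- m = 1
      have h0 := hE 0 (by omega)
      have h1' := hE 1 (by omega)
      rw [← h1] at h0 h1'
      refine tmw_no_triple p ⟨?_, ?_⟩
      · simpa using h0
      · simpa [show p + 1 + 1 = p + 2 by omega] using h1'
    rcases Nat.even_or_odd m with ⟨m', hm'⟩ | ⟨h, hh⟩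
    · -- m even, m = 2 * m'
      have hm'1 : 1 ≤ m' := by omega
      have hm'lt : m' < m := by omega
      rcases Nat.even_or_odd p with ⟨q, hq⟩ | ⟨q, hq⟩
      · refine IH m' hm'lt hm'1 q fun j hj => ?_
        have this := hE (2 * j) (by omega)
        have e2 : p + 2 * j + m = 2 * (q + j + m') := by omega
        have e1 : p + 2 * j = 2 * (q + j) := by omega
        rw [e2, e1, tmw_even, tmw_even] at this
        exact this
      · refine IH m' hm'lt hm'1 q fun j hj => ?_
        have this := hE (2 * j) (by omega)
        have e2 : p + 2 * j + m = 2 * (q + j + m') + 1 := by omega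
        have e1 : p + 2 * j = 2 * (q + j) + 1 := by omega
        rw [e2, e1, tmw_odd, tmw_odd] at this
        simpa using this
    · -- m odd, m = 2 * h + 1, h ≥ 1
      have hh1 : 1 ≤ h := by omega
      rcases Nat.even_or_odd p with ⟨w, hw⟩ | ⟨w, hw⟩
      · -- p = 2 * w
        have T1 : ∀ i ≤ h, tmw (w + i + h) = !tmw (w + i) := by
          intro i hi
          have this := hE (2 * i) (by omega)
          have e2 : p + 2 * i + m = 2 * (w + i + h) + 1 := by omega
          have e1 : p + 2 * i = 2 * (w + i) := by omega
          rw [e2, e1, tmw_even, tmw_odd] at this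
          simp [this]
        have T2 : ∀ i ≤ h, tmw (w + i + h + 1) = !tmw (w + i) := by
          intro i hi
          have this := hE (2 * i + 1) (by omega)
          have e2 : p + (2 * i + 1) + m = 2 * (w + i + h + 1) := by omega
          have e1 : p + (2 * i + 1) = 2 * (w + i) + 1 := by omega
          rw [e2, e1, tmw_odd, tmw_even] at this
          simp [← this]
        have a0 := T1 0 (by omega)
        have a1 := T2 0 (by omega)
        have b0 := T1 1 hh1
        have b1 := T2 1 hh1
        rw [show w + 0 + h = w + h by omega, show w + 0 = w by omega] at a0
        rw [show w + 0 + h + 1 = w + h + 1 by omega, show w + 0 = w by omega] at a1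
        rw [show w + 1 + h = w + h + 1 by omega] at b0
        rw [show w + 1 + h + 1 = w + h + 2 by omega] at b1
        exact tmw_no_triple (w + h) ⟨by rw [a0, a1], by rw [b0, b1]⟩
      · -- p = 2 * w + 1
        have A : ∀ i ≤ h, tmw (w + i + h + 1) = !tmw (w + i + 1) := by
          intro i hi
          have this := hE (2 * i + 1) (by omega)
          have e2 : p + (2 * i + 1) + m = 2 * (w + i + h + 1) + 1 := by omega
          have e1 : p + (2 * i + 1) = 2 * (w + i + 1) := by omega
          rw [e2, e1, tmw_even, tmw_odd] at this
          simp [this]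
        have B : ∀ i ≤ h, tmw (w + i + h + 1) = !tmw (w + i) := by
          intro i hi
          have this := hE (2 * i) (by omega)
          have e2 : p + 2 * i + m = 2 * (w + i + h + 1) := by omega
          have e1 : p + 2 * i = 2 * (w + i) + 1 := by omega
          rw [e2, e1, tmw_odd, tmw_even] at this
          simp [← this]
        have key : ∀ i ≤ h, tmw (w + i) = tmw (w + i + 1) := by
          intro i hi
          have a := A i hi
          have b := B i hi
          rw [a] at b
          simpa using b.symm
        have k0 := key 0 (by omega)
        have k1 := key 1 hh1
        rw [show w + 0 = w by omega, show w + 0 + 1 = w + 1 by omega] at k0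
        rw [show w + 1 + 1 = w + 2 by omega] at k1
        exact tmw_no_triple w ⟨k0, k1⟩

/-- The ternary square-free word: coded first difference of Thue–Morse. -/
def cw (n : ℕ) : ℕ :=
  match tmw n, tmw (n + 1) with
  | false, true => 3
  | true, false => 1
  | _, _ => 2

lemma cw_pos (n : ℕ) : 1 ≤ cw n := by
  unfold cw; rcases tmw n <;> rcases tmw (n+1) <;> simp

lemma cw_le (n : ℕ) : cw n ≤ 3 := by
  unfold cw; rcases tmw n <;> rcases tmw (n+1) <;> simp

/-- From `cw` equality: components agree or everything is flipped with a level pair. -/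
lemma cw_eq_elim {a b : ℕ} (h : cw a = cw b) :
    (tmw a = tmw b ∧ tmw (a+1) = tmw (b+1)) ∨
    (tmw a = !tmw b ∧ tmw (a+1) = !tmw (b+1) ∧ tmw a = tmw (a+1)) := by
  unfold cw at h
  rcases ha : tmw a <;> rcases ha1 : tmw (a+1) <;> rcases hb : tmw b <;> rcases hb1 : tmw (b+1) <;>
    rw [ha, ha1, hb, hb1] at h <;> simp_all

lemma cw_adj (n : ℕ) : cw n ≠ cw (n + 1) := by
  intro h
  have e : n + 1 + 1 = n + 2 := rfl
  unfold cw at h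
  rw [e] at h
  rcases ha : tmw n <;> rcases hb : tmw (n+1) <;> rcases hc : tmw (n+2) <;>
    rw [ha, hb, hc] at h <;> simp at h <;>
    exact tmw_no_triple n ⟨by rw [ha, hb], by rw [hb, hc]⟩

/-- `cw` is square-free. -/
theorem cw_no_square : ∀ m, 1 ≤ m → ∀ p, ¬ (∀ j < m, cw (p + j) = cw (p + j + m)) := by
  intro m hm p hE
  rcases eq_or_lt_of_le hm with h1 | h1
  · have h0 := hE 0 (by omega)
    subst h1
    exact cw_adj p h0
  -- now m ≥ 2
  by_cases hc : tmw p = tmw (p + m)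
  · -- all levels match: overlap
    have claim1 : ∀ j, j ≤ m → tmw (p + j) = tmw (p + j + m) := by
      intro j
      induction j with
      | zero => intro _; simpa using hc
      | succ j ih =>
        intro hj
        have ihj := ih (by omega)
        rcases cw_eq_elim (hE j (by omega)) with ⟨_, h2⟩ | ⟨hx, _, _⟩
        · have e : p + (j + 1) + m = p + j + m + 1 := by omega
          rw [e]; exact h2
        · rw [ihj] at hx; simp at hx
    exact tmw_no_overlap m hm p claim1
  · have hc' : tmw p = !tmw (p + m) := by
      rcases h1 : tmw p <;> rcases h2 : tmw (p + m) <;> simp_all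
    have claim2 : ∀ j, j ≤ m → tmw (p + j) = !tmw (p + j + m) := by
      intro j
      induction j with
      | zero => intro _; simpa using hc'
      | succ j ih =>
        intro hj
        have ihj := ih (by omega)
        rcases cw_eq_elim (hE j (by omega)) with ⟨hx, _⟩ | ⟨_, h2, _⟩
        · rw [ihj] at hx; simp at hx
        · have e : p + (j + 1) + m = p + j + m + 1 := by omega
          rw [e]; exact h2
    have claim3 : ∀ j, j < m → tmw (p + j) = tmw (p + j + 1) := by
      intro j hj
      rcases cw_eq_elim (hE j hj) with ⟨hx, _⟩ | ⟨_, _, h3⟩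
      · rw [claim2 j (by omega)] at hx; simp at hx
      · exact h3
    have k0 := claim3 0 (by omega)
    have k1 := claim3 1 h1
    rw [show p + 1 + 1 = p + 2 from rfl] at k1
    exact tmw_no_triple p ⟨k0, k1⟩

/-- The 4-colour word used on the path: `0` at multiples of 3, `cw` letters in between. -/
def psiw (q : ℕ) : ℕ :=
  if q % 3 = 0 then 0 else cw (2 * (q / 3) + (q % 3 - 1))

lemma psiw_lt (q : ℕ) : psiw q < 4 := by
  unfold psiw
  split
  · omega
  · have := cw_le (2 * (q / 3) + (q % 3 - 1)); omega

lemma psiw_eq_zero_iff (q : ℕ) : psiw q = 0 ↔ q % 3 = 0 := by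
  unfold psiw
  by_cases h : q % 3 = 0
  · simp [h]
  · have := cw_pos (2 * (q / 3) + (q % 3 - 1))
    simp only [if_neg h]
    omega

/-- Local injectivity of `psiw` at distance 1 and 2. -/
lemma psiw_close {p q : ℕ} (h : psiw p = psiw q) (h1 : p < q) (h2 : q ≤ p + 2) : False := by
  have hr : p % 3 = 0 ∨ p % 3 = 1 ∨ p % 3 = 2 := by omega
  have hq : q = p + 1 ∨ q = p + 2 := by omega
  unfold psiw at h
  rcases hq with hq | hq <;> subst hq <;> rcases hr with hr | hr | hr
  · rw [if_pos (by omega), if_neg (by omega)] at h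
    have := cw_pos (2 * ((p+1) / 3) + ((p+1) % 3 - 1)); omega
  · rw [if_neg (by omega), if_neg (by omega)] at h
    rw [show (p+1) / 3 = p / 3 by omega, show (p+1) % 3 - 1 = 1 by omega,
      show p % 3 - 1 = 0 by omega] at h
    exact cw_adj _ (by rw [show 2 * (p/3) + 0 = 2 * (p/3) by omega] at h; exact h)
  · rw [if_neg (by omega), if_pos (by omega)] at h
    have := cw_pos (2 * (p / 3) + (p % 3 - 1)); omega
  · rw [if_pos (by omega), if_neg (by omega)] at h
    have := cw_pos (2 * ((p+2) / 3) + ((p+2) % 3 - 1)); omega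
  · rw [if_neg (by omega), if_pos (by omega)] at h
    have := cw_pos (2 * (p / 3) + (p % 3 - 1)); omega
  · rw [if_neg (by omega), if_neg (by omega)] at h
    rw [show (p+2) / 3 = p / 3 + 1 by omega, show (p+2) % 3 - 1 = 0 by omega,
      show p % 3 - 1 = 1 by omega] at h
    refine cw_adj (2 * (p/3) + 1) ?_
    rw [show 2 * (p/3) + 1 + 1 = 2 * (p/3 + 1) + 0 by omega]
    exact h

lemma psiw_c (i : ℕ) : psiw (3 * (i / 2) + i % 2 + 1) = cw i := by
  have h1 : (3 * (i / 2) + i % 2 + 1) % 3 = i % 2 + 1 := by omega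
  have h2 : (3 * (i / 2) + i % 2 + 1) / 3 = i / 2 := by omega
  unfold psiw
  rw [if_neg (by omega), h1, h2, show i % 2 + 1 - 1 = i % 2 by omega,
    show 2 * (i / 2) + i % 2 = i by omega]

/-- `psiw` has no squares of period `≥ 3`. -/
theorem psiw_no_square {D : ℕ} (hD : 3 ≤ D) (p : ℕ) :
    ¬ (∀ j < D, psiw (p + j) = psiw (p + j + D)) := by
  intro hE
  -- first, 3 ∣ D
  have hdiv : D % 3 = 0 := by
    set j0 := (3 - p % 3) % 3 with hj0
    have h0 := hE j0 (by omega)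
    have hx0 : (p + j0) % 3 = 0 := by omega
    rw [(psiw_eq_zero_iff _).2 hx0] at h0
    have := (psiw_eq_zero_iff _).1 h0.symm
    omega
  set h := D / 3 with hh
  have hD3 : D = 3 * h := by omega
  have hh1 : 1 ≤ h := by omega
  have key : ∀ q0, (∀ s, s < 2 * h →
      p ≤ 3 * ((q0 + s) / 2) + (q0 + s) % 2 + 1 ∧
      3 * ((q0 + s) / 2) + (q0 + s) % 2 + 1 < p + D) → False := by
    intro q0 hrange
    refine cw_no_square (2 * h) (by omega) q0 ?_
    intro s hs
    have hr := hrange s hs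
    have e1 := (psiw_c (q0 + s)).symm
    have e2 := (psiw_c (q0 + s + 2 * h)).symm
    have epos : 3 * ((q0 + s + 2 * h) / 2) + (q0 + s + 2 * h) % 2 + 1
        = (3 * ((q0 + s) / 2) + (q0 + s) % 2 + 1) + D := by omega
    have hj := hE (3 * ((q0 + s) / 2) + (q0 + s) % 2 + 1 - p) (by omega)
    rw [show p + (3 * ((q0 + s) / 2) + (q0 + s) % 2 + 1 - p)
        = 3 * ((q0 + s) / 2) + (q0 + s) % 2 + 1 by omega] at hj
    rw [e1, e2, epos]
    exact hj
  by_cases hc : p % 3 = 2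
  · exact key (2 * (p / 3) + 1) (by intro s hs; constructor <;> omega)
  · exact key (2 * (p / 3)) (by intro s hs; constructor <;> omega)

lemma psiw_far {a b : ℕ} (h : psiw a = psiw b) (hne : a ≠ b) : a + 3 ≤ b ∨ b + 3 ≤ a := by
  rcases lt_trichotomy a b with hl | hl | hl
  · left; by_contra hq; exact psiw_close h hl (by omega)
  · exact absurd hl hne
  · right; by_contra hq; exact psiw_close h.symm hl (by omega)

lemma mono_of (k : ℕ) (f : ℕ → ℕ) (hk : 2 ≤ k)
    (hstep : ∀ t, t + 1 < k → f (t + 1) = f t + 1 ∨ f t = f (t + 1) + 1)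
    (hnw : ∀ t, t + 2 < k → f (t + 2) ≠ f t) :
    (∀ t, t < k → f t = f 0 + t) ∨ (∀ t, t < k → f t + t = f 0) := by
  rcases hstep 0 (by omega) with h0 | h0
  · left
    have up : ∀ t, t + 1 < k → f (t + 1) = f t + 1 := by
      intro t
      induction t with
      | zero => intro _; exact h0
      | succ t ih =>
        intro ht
        have iht := ih (by omega)
        rcases hstep (t + 1) ht with h | h
        · exact h
        · refine absurd ?_ (hnw t (by omega))
          rw [show t + 2 = t + 1 + 1 by omega]
          omega
    intro t
    induction t with
    | zero => intro _; omega
    | succ t ih =>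
      intro ht
      have h1 := up t (by omega)
      have h2 := ih (by omega)
      omega
  · right
    have dn : ∀ t, t + 1 < k → f t = f (t + 1) + 1 := by
      intro t
      induction t with
      | zero => intro _; exact h0
      | succ t ih =>
        intro ht
        have iht := ih (by omega)
        rcases hstep (t + 1) ht with h | h
        · refine absurd ?_ (hnw t (by omega))
          rw [show t + 2 = t + 1 + 1 by omega]
          omega
        · exact h
    intro t
    induction t with
    | zero => intro _; omega
    | succ t ih =>
      intro ht
      have h1 := dn t (by omega)
      have h2 := ih (by omega)
      omega

/-- Core combinatorial lemma: a `psiw`-synchronised lazy double walk on `ℕ` must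
have a coincidence. -/
theorem core_lemma : ∀ k, 1 ≤ k → ∀ x : ℕ → ℕ,
    (∀ t, t + 1 < 2 * k → x (t + 1) ≤ x t + 1 ∧ x t ≤ x (t + 1) + 1) →
    (∀ t, t < k → psiw (x t) = psiw (x (t + k))) →
    ∃ t, t < k ∧ x t = x (t + k) := by
  intro k
  induction k using Nat.strong_induction_on with
  | _ k IH =>
    intro hk x hlazy hsync
    by_contra hbad
    push_neg at hbad
    have hbad' : ∀ t, t < k → x t ≠ x (t + k) := fun t ht => hbad t ht
    have hgap : ∀ t, t < k → x t + 3 ≤ x (t + k) ∨ x (t + k) + 3 ≤ x t := fun t ht =>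
      psiw_far (hsync t ht) (hbad' t ht)
    rcases eq_or_lt_of_le hk with hk1 | hk2
    · subst hk1
      have h1 := hlazy 0 (by omega)
      have h2 := hgap 0 (by omega)
      omega
    -- k ≥ 2
    have hstw : ∀ t, t + 1 < k → x (t + 1) = x t → x (t + k + 1) = x (t + k) := by
      intro t ht hst
      have hs1 := hsync t (by omega)
      have hs2 := hsync (t + 1) (by omega)
      have hl := hlazy (t + k) (by omega)
      have he : psiw (x (t + k + 1)) = psiw (x (t + k)) := by
        rw [show t + k + 1 = t + 1 + k by omega, ← hs2, hst, hs1]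
      by_contra hne
      rcases psiw_far he hne with h | h <;> omega
    have hwgw : ∀ t, t + 2 < k → x (t + 2) = x t → x (t + k + 2) = x (t + k) := by
      intro t ht hst
      have hs1 := hsync t (by omega)
      have hs2 := hsync (t + 2) (by omega)
      have hl1 := hlazy (t + k) (by omega)
      have hl2 := hlazy (t + k + 1) (by omega)
      rw [show t + k + 1 + 1 = t + k + 2 by omega] at hl2
      have he : psiw (x (t + k + 2)) = psiw (x (t + k)) := by
        rw [show t + k + 2 = t + 2 + k by omega, ← hs2, hst, hs1]
      by_contra hne
      rcases psiw_far he hne with h | h <;> omega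
    by_cases hA : ∃ t, t + 1 < k ∧ x (t + 1) = x t
    · obtain ⟨t, ht, hst⟩ := hA
      have hw := hstw t ht hst
      set x' : ℕ → ℕ := fun s =>
        if s ≤ t then x s else if s ≤ t + k - 1 then x (s + 1) else x (s + 2) with hx'
      have e1 : ∀ s, s ≤ t → x' s = x s := by
        intro s h; simp only [hx']; rw [if_pos h]
      have e2 : ∀ s, t < s → s ≤ t + k - 1 → x' s = x (s + 1) := by
        intro s h h'; simp only [hx']; rw [if_neg (by omega), if_pos h']
      have e3 : ∀ s, t + k - 1 < s → x' s = x (s + 2) := by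
        intro s h; simp only [hx']; rw [if_neg (by omega), if_neg (by omega)]
      have hres := IH (k - 1) (by omega) (by omega) x' ?_ ?_
      · obtain ⟨s, hs, heq⟩ := hres
        rcases le_or_gt s t with hle | hlt
        · rw [e1 s hle, e2 (s + (k - 1)) (by omega) (by omega),
            show s + (k - 1) + 1 = s + k by omega] at heq
          exact hbad' s (by omega) heq
        · rw [e2 s hlt (by omega), e3 (s + (k - 1)) (by omega),
            show s + (k - 1) + 2 = s + 1 + k by omega] at heq
          exact hbad' (s + 1) (by omega) heq
      · -- lazy
        intro s hs
        rcases Nat.lt_or_ge s t with h1 | h1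
        · rw [e1 s (by omega), e1 (s + 1) (by omega)]; exact hlazy s (by omega)
        rcases eq_or_lt_of_le h1 with h1' | h1'
        · rw [e1 s (by omega), e2 (s + 1) (by omega) (by omega)]
          have := hlazy (s + 1) (by omega)
          have hst' : x (s + 1) = x s := by rw [← h1']; exact hst
          omega
        rcases le_or_gt (s + 1) (t + k - 1) with h2 | h2
        · rw [e2 s (by omega) (by omega), e2 (s + 1) (by omega) h2]
          exact hlazy (s + 1) (by omega)
        rcases eq_or_lt_of_le (show t + k - 1 ≤ s by omega) with h2' | h2'
        · rw [e2 s (by omega) (by omega), e3 (s + 1) (by omega),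
            show s + 1 + 2 = s + 2 + 1 by omega]
          have hll := hlazy (s + 2) (by omega)
          have hww : x (s + 2) = x (s + 1) := by
            rw [show s + 2 = t + k + 1 by omega, show s + 1 = t + k by omega]
            exact hw
          omega
        · rw [e3 s h2', e3 (s + 1) (by omega), show s + 1 + 2 = s + 2 + 1 by omega]
          exact hlazy (s + 2) (by omega)
      · -- sync
        intro s hs
        rcases le_or_gt s t with hle | hlt
        · rw [e1 s hle, e2 (s + (k - 1)) (by omega) (by omega),
            show s + (k - 1) + 1 = s + k by omega]
          exact hsync s (by omega)
        · rw [e2 s hlt (by omega), e3 (s + (k - 1)) (by omega),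
            show s + (k - 1) + 2 = s + 1 + k by omega]
          exact hsync (s + 1) (by omega)
    push_neg at hA
    by_cases hB : ∃ t, t + 2 < k ∧ x (t + 2) = x t
    · obtain ⟨t, ht, hst⟩ := hB
      have hw := hwgw t ht hst
      set x' : ℕ → ℕ := fun s =>
        if s ≤ t then x s else if s ≤ t + k - 2 then x (s + 2) else x (s + 4) with hx'
      have e1 : ∀ s, s ≤ t → x' s = x s := by
        intro s h; simp only [hx']; rw [if_pos h]
      have e2 : ∀ s, t < s → s ≤ t + k - 2 → x' s = x (s + 2) := by
        intro s h h'; simp only [hx']; rw [if_neg (by omega), if_pos h']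
      have e3 : ∀ s, t + k - 2 < s → x' s = x (s + 4) := by
        intro s h; simp only [hx']; rw [if_neg (by omega), if_neg (by omega)]
      have hres := IH (k - 2) (by omega) (by omega) x' ?_ ?_
      · obtain ⟨s, hs, heq⟩ := hres
        rcases le_or_gt s t with hle | hlt
        · rw [e1 s hle, e2 (s + (k - 2)) (by omega) (by omega),
            show s + (k - 2) + 2 = s + k by omega] at heq
          exact hbad' s (by omega) heq
        · rw [e2 s hlt (by omega), e3 (s + (k - 2)) (by omega),
            show s + (k - 2) + 4 = s + 2 + k by omega] at heq
          exact hbad' (s + 2) (by omega) heq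
      · -- lazy
        intro s hs
        rcases Nat.lt_or_ge s t with h1 | h1
        · rw [e1 s (by omega), e1 (s + 1) (by omega)]; exact hlazy s (by omega)
        rcases eq_or_lt_of_le h1 with h1' | h1'
        · rw [e1 s (by omega), e2 (s + 1) (by omega) (by omega),
            show s + 1 + 2 = s + 2 + 1 by omega]
          have := hlazy (s + 2) (by omega)
          have hst' : x (s + 2) = x s := by rw [← h1']; exact hst
          omega
        rcases le_or_gt (s + 1) (t + k - 2) with h2 | h2
        · rw [e2 s (by omega) (by omega), e2 (s + 1) (by omega) h2,
            show s + 1 + 2 = s + 2 + 1 by omega]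
          exact hlazy (s + 2) (by omega)
        rcases eq_or_lt_of_le (show t + k - 2 ≤ s by omega) with h2' | h2'
        · rw [e2 s (by omega) (by omega), e3 (s + 1) (by omega),
            show s + 1 + 4 = s + 4 + 1 by omega]
          have hll := hlazy (s + 4) (by omega)
          have hww : x (s + 4) = x (s + 2) := by
            rw [show s + 4 = t + k + 2 by omega, show s + 2 = t + k by omega]
            exact hw
          omega
        · rw [e3 s h2', e3 (s + 1) (by omega), show s + 1 + 4 = s + 4 + 1 by omega]
          exact hlazy (s + 4) (by omega)
      · -- sync
        intro s hs
        rcases le_or_gt s t with hle | hlt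
        · rw [e1 s hle, e2 (s + (k - 2)) (by omega) (by omega),
            show s + (k - 2) + 2 = s + k by omega]
          exact hsync s (by omega)
        · rw [e2 s hlt (by omega), e3 (s + (k - 2)) (by omega),
            show s + (k - 2) + 4 = s + 2 + k by omega]
          exact hsync (s + 2) (by omega)
    push_neg at hB
    -- no stays, no wiggles: both halves strictly monotone
    have hnsw : ∀ t, t + 1 < k → x (t + 1 + k) ≠ x (t + k) := by
      intro t ht heq
      have he : psiw (x (t + 1)) = psiw (x t) := by
        rw [hsync (t + 1) (by omega), heq, ← hsync t (by omega)]
      have hl := hlazy t (by omega)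
      refine hA t ht ?_
      by_contra hne
      rcases psiw_far he hne with h | h <;> omega
    have hnww : ∀ t, t + 2 < k → x (t + 2 + k) ≠ x (t + k) := by
      intro t ht heq
      have he : psiw (x (t + 2)) = psiw (x t) := by
        rw [hsync (t + 2) (by omega), heq, ← hsync t (by omega)]
      have hl1 := hlazy t (by omega)
      have hl2 := hlazy (t + 1) (by omega)
      rw [show t + 1 + 1 = t + 2 by omega] at hl2
      refine hB t ht ?_
      by_contra hne
      rcases psiw_far he hne with h | h <;> omega
    have hstepu : ∀ t, t + 1 < k → x (t + 1) = x t + 1 ∨ x t = x (t + 1) + 1 := by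
      intro t ht
      have h1 := hlazy t (by omega)
      have h2 := hA t ht
      omega
    have hstepw : ∀ t, t + 1 < k → x (t + 1 + k) = x (t + k) + 1 ∨ x (t + k) = x (t + 1 + k) + 1 := by
      intro t ht
      have h1 := hlazy (t + k) (by omega)
      have h2 := hnsw t ht
      rw [show t + 1 + k = t + k + 1 by omega] at h2 ⊢
      omega
    have hU := mono_of k x (by omega) hstepu hB
    have hWm := mono_of k (fun t => x (t + k)) (by omega) hstepw hnww
    have hW0 : x (0 + k) = x k := by rw [Nat.zero_add]
    have hcpl := hlazy (k - 1) (by omega)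
    rw [show k - 1 + 1 = k by omega] at hcpl
    have hg0 := hgap 0 (by omega)
    rcases hU with U | U
    · have U' : ∀ t, t < k → x t = x 0 + t := U
      have hUl := U' (k - 1) (by omega)
      rcases hWm with W | W
      · have W' : ∀ t, t < k → x (t + k) = x (0 + k) + t := W
        have hWl := W' (k - 1) (by omega)
        by_cases hc : x 0 + 3 ≤ x (0 + k)
        · have hDk : x (0 + k) ≤ x 0 + k := by omega
          refine absurd ?_ (psiw_no_square (D := x (0 + k) - x 0) (by omega) (x 0))
          intro j hj
          have hs := hsync j (by omega)
          rw [U' j (by omega), W' j (by omega)] at hs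
          rw [show x 0 + j + (x (0 + k) - x 0) = x (0 + k) + j by omega]
          exact hs
        · rcases hg0 with hg0 | hg0 <;> omega
      · have W' : ∀ t, t < k → x (t + k) + t = x (0 + k) := W
        have hWl := W' (k - 1) (by omega)
        by_cases hc : x 0 + 3 ≤ x (0 + k)
        · have hgl := hgap (k - 1) (by omega)
          rcases hgl with hgl | hgl
          · omega
          · have ht1 := hgap ((x (0 + k) - x 0 - 1) / 2) (by omega)
            have hu := U' ((x (0 + k) - x 0 - 1) / 2) (by omega)
            have hw2 := W' ((x (0 + k) - x 0 - 1) / 2) (by omega)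
            rcases ht1 with h | h <;> omega
        · rcases hg0 with hg0 | hg0 <;> omega
    · have U' : ∀ t, t < k → x t + t = x 0 := U
      have hUl := U' (k - 1) (by omega)
      rcases hWm with W | W
      · have W' : ∀ t, t < k → x (t + k) = x (0 + k) + t := W
        by_cases hc : x 0 + 3 ≤ x (0 + k)
        · omega
        · rcases hg0 with hg0 | hg0
          · omega
          · have ht1 := hgap ((x 0 - x (0 + k) + 1) / 2) (by omega)
            have hu := U' ((x 0 - x (0 + k) + 1) / 2) (by omega)
            have hw2 := W' ((x 0 - x (0 + k) + 1) / 2) (by omega)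
            rcases ht1 with h | h <;> omega
      · have W' : ∀ t, t < k → x (t + k) + t = x (0 + k) := W
        by_cases hc : x 0 + 3 ≤ x (0 + k)
        · omega
        · rcases hg0 with hg0 | hg0
          · omega
          · have hgk : x 0 - x (0 + k) ≤ k := by omega
            have hq := W' (x 0 - x (0 + k) - 1) (by omega)
            refine absurd ?_ (psiw_no_square (D := x 0 - x (0 + k)) (by omega)
              (x (x 0 - x (0 + k) - 1 + k)))
            intro j hj
            have hs := hsync (x 0 - x (0 + k) - 1 - j) (by omega)
            have hu := U' (x 0 - x (0 + k) - 1 - j) (by omega)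
            have hw := W' (x 0 - x (0 + k) - 1 - j) (by omega)
            have ea : x (x 0 - x (0 + k) - 1 - j)
                = x (x 0 - x (0 + k) - 1 + k) + j + (x 0 - x (0 + k)) := by omega
            have eb : x (x 0 - x (0 + k) - 1 - j + k)
                = x (x 0 - x (0 + k) - 1 + k) + j := by omega
            rw [ea, eb] at hs
            exact hs.symm

/-- Equality of the two halves of a list, pointwise interface. -/
lemma take_drop_iff {β : Type*} (L : List β) (k : ℕ) (hlen : L.length = 2 * k) :
    (L.take k = L.drop k) ↔ ∀ i, i < k → L[i]? = L[i + k]? := by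
  constructor
  · intro h i hi
    have h2 := congrArg (fun t => t[i]?) h
    rwa [List.getElem?_take, if_pos hi, List.getElem?_drop,
      show k + i = i + k by omega] at h2
  · intro h
    apply List.ext_getElem?
    intro i
    by_cases hi : i < k
    · rw [List.getElem?_take, if_pos hi, List.getElem?_drop, show k + i = i + k by omega]
      exact h i hi
    · rw [List.getElem?_eq_none (by simp [List.length_take]; omega),
        List.getElem?_eq_none (by simp [List.length_drop]; omega)]

lemma spread_lemma (k : ℕ) (x : ℕ → ℕ)
    (hlazy : ∀ t, t + 1 < 2 * k → x (t + 1) ≤ x t + 1 ∧ x t ≤ x (t + 1) + 1)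
    (hsync : ∀ t, t < k → psiw (x t) = psiw (x (t + k)))
    (t0 : ℕ) (ht0 : t0 < k) (h0 : x t0 = x (t0 + k)) :
    ∀ t, t < k → x t = x (t + k) := by
  have step_up : ∀ t, t + 1 < k → x t = x (t + k) → x (t + 1) = x (t + 1 + k) := by
    intro t ht ht'
    have hl1 := hlazy t (by omega)
    have hl2 := hlazy (t + k) (by omega)
    have hs := hsync (t + 1) ht
    rw [show t + 1 + k = t + k + 1 by omega] at hs ⊢
    by_contra hne
    rcases psiw_far hs hne with h | h <;> omega
  have step_dn : ∀ t, t + 1 < k → x (t + 1) = x (t + 1 + k) → x t = x (t + k) := by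
    intro t ht ht'
    have hl1 := hlazy t (by omega)
    have hl2 := hlazy (t + k) (by omega)
    have hs := hsync t (by omega)
    rw [show t + 1 + k = t + k + 1 by omega] at ht'
    by_contra hne
    rcases psiw_far hs hne with h | h <;> omega
  have up : ∀ s, t0 + s < k → x (t0 + s) = x (t0 + s + k) := by
    intro s
    induction s with
    | zero => intro _; exact h0
    | succ s ih =>
      intro hs
      exact step_up (t0 + s) hs (ih (by omega))
  have dn : ∀ s, s ≤ t0 → x (t0 - s) = x (t0 - s + k) := by
    intro s
    induction s with
    | zero => intro _; exact h0
    | succ s ih =>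
      intro hs
      have h1 := ih (by omega)
      have h2 : t0 - s = (t0 - (s + 1)) + 1 := by omega
      rw [h2] at h1
      exact step_dn (t0 - (s + 1)) (by omega) h1
  intro t ht
  rcases le_or_gt t t0 with h | h
  · have := dn (t0 - t) (by omega)
    rwa [show t0 - (t0 - t) = t by omega] at this
  · have := up (t - t0) (by omega)
    rwa [show t0 + (t - t0) = t by omega] at this

lemma code_inj {m : ℕ} (hm : 0 < m) (a b : Fin m) (c d : ℕ)
    (h : a.val + m * c = b.val + m * d) : a = b ∧ c = d := by
  have hc : c = d := by
    have e1 : (a.val + c * m) / m = a.val / m + c := Nat.add_mul_div_right _ _ hm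
    have e2 : (b.val + d * m) / m = b.val / m + d := Nat.add_mul_div_right _ _ hm
    have e3 : a.val / m = 0 := Nat.div_eq_of_lt a.isLt
    have e4 : b.val / m = 0 := Nat.div_eq_of_lt b.isLt
    have e5 : a.val + c * m = b.val + d * m := by
      rw [Nat.mul_comm c m, Nat.mul_comm d m]; exact h
    rw [e5] at e1
    omega
  subst hc
  refine ⟨Fin.ext ?_, rfl⟩
  omega

/-- Injective colourings are strongly nonrepetitive. -/
lemma isStronglyNonrepetitiveColouring_of_injective {V α : Type*} (G : SimpleGraph V)
    (φ : V → α) (hinj : Function.Injective φ) :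
    G.IsStronglyNonrepetitiveColouring φ := by
  intro l k hwalk hk hlen hrep
  have h1 : 0 < l.length := by omega
  have h2 : 0 + k < l.length := by omega
  have h0 := (take_drop_iff (l.map φ) k (by simpa using hlen)).1 hrep 0 hk
  rw [List.getElem?_map, List.getElem?_map, List.getElem?_eq_getElem h1,
    List.getElem?_eq_getElem h2] at h0
  simp only [Option.map_some] at h0
  have := hinj (Option.some.inj h0)
  exact ⟨0, hk, by rw [List.getElem?_eq_getElem h1, List.getElem?_eq_getElem h2, this]⟩

/-- **Corollary 7.** For every graph `G` and every path `P`, `π*(G ⊠ P) ≤ 4 · π*(G)`. -/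
theorem strongNonrepChromNum_strongProd_pathGraph_le (V : Type) [Fintype V]
    (G : SimpleGraph V) (n : ℕ) :
    (G.strongProd (SimpleGraph.pathGraph n)).strongNonrepChromNum ≤
      4 * G.strongNonrepChromNum := by
  classical
  have hne : {c : ℕ | ∃ φ : V → Fin c, G.IsStronglyNonrepetitiveColouring φ}.Nonempty :=
    ⟨Fintype.card V, Fintype.equivFin V,
      isStronglyNonrepetitiveColouring_of_injective G _ (Fintype.equivFin V).injective⟩
  set m := G.strongNonrepChromNum with hm
  obtain ⟨φ, hφ⟩ : ∃ φ : V → Fin m, G.IsStronglyNonrepetitiveColouring φ := Nat.sInf_mem hne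
  rcases Nat.eq_zero_or_pos m with hm0 | hmpos
  · -- `V` is empty
    have hV : IsEmpty V := ⟨fun v => by have := (φ v).isLt; omega⟩
    have hmem : ∃ Φ : V × Fin n → Fin (4 * m),
        (G.strongProd (SimpleGraph.pathGraph n)).IsStronglyNonrepetitiveColouring Φ := by
      refine ⟨fun p => (hV.false p.1).elim, ?_⟩
      intro l k hwalk hk hlen hrep
      cases l with
      | nil => simp at hlen; omega
      | cons a t => exact (hV.false a.1).elim
    exact Nat.sInf_le hmem
  · -- main case
    have hmem : ∃ Φ : V × Fin n → Fin (4 * m),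
        (G.strongProd (SimpleGraph.pathGraph n)).IsStronglyNonrepetitiveColouring Φ := by
      refine ⟨fun p => ⟨(φ p.1).val + m * psiw (p.2.val), by
        have h1 := (φ p.1).isLt
        have h2 := psiw_lt (p.2.val)
        have h3 : m * psiw (p.2.val) ≤ m * 3 := Nat.mul_le_mul_left m (by omega)
        omega⟩, ?_⟩
      intro l k hwalk hk hlen hrep
      -- pointwise colour equality
      have hpt : ∀ i, i < k → ∀ (hi1 : i < l.length) (hi2 : i + k < l.length),
          φ ((l[i]'hi1).1) = φ ((l[i + k]'hi2).1) ∧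
          psiw ((l[i]'hi1).2.val) = psiw ((l[i + k]'hi2).2.val) := by
        intro i hik hi1 hi2
        have h0 := (take_drop_iff _ k (by simpa using hlen)).1 hrep i hik
        rw [List.getElem?_map, List.getElem?_map, List.getElem?_eq_getElem hi1,
          List.getElem?_eq_getElem hi2] at h0
        simp only [Option.map_some] at h0
        have hval := congrArg Fin.val (Option.some.inj h0)
        simp only at hval
        obtain ⟨he1, he2⟩ := code_inj hmpos _ _ _ _ hval
        exact ⟨he1, he2⟩
      -- the path-coordinate walk
      have hgetd : ∀ t (ht : t < l.length), l[t]? = some (l[t]'ht) :=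
        fun t ht => List.getElem?_eq_getElem ht
      set x : ℕ → ℕ := fun t => ((l[t]?).getD ⟨(l[0]'(by omega)).1, (l[0]'(by omega)).2⟩).2.val
        with hxdef
      have hxe : ∀ t (ht : t < l.length), x t = (l[t]'ht).2.val := by
        intro t ht
        rw [hxdef]
        simp only [hgetd t ht, Option.getD_some]
      have hchain := List.isChain_iff_getElem.1 hwalk
      have hlazy : ∀ t, t + 1 < 2 * k → x (t + 1) ≤ x t + 1 ∧ x t ≤ x (t + 1) + 1 := by
        intro t ht
        have ht1 : t < l.length - 1 := by omega
        have hc : (l[t]'(by omega)) = (l[t+1]'(by omega)) ∨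
            (G.strongProd (SimpleGraph.pathGraph n)).Adj (l[t]'(by omega)) (l[t+1]'(by omega)) := by
          simpa using hchain t (by omega)
        rw [hxe t (by omega), hxe (t + 1) (by omega)]
        rcases hc with heq | hadj
        · rw [heq]; omega
        · rcases hadj.2.2 with heq2 | hpadj
          · rw [heq2]; omega
          · rw [SimpleGraph.pathGraph_adj] at hpadj
            omega
      have hsync : ∀ t, t < k → psiw (x t) = psiw (x (t + k)) := by
        intro t ht
        rw [hxe t (by omega), hxe (t + k) (by omega)]
        exact (hpt t ht (by omega) (by omega)).2
      obtain ⟨t0, ht0, hx0⟩ := core_lemma k hk x hlazy hsync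
      have hall := spread_lemma k x hlazy hsync t0 ht0 hx0
      -- the G-coordinate walk
      have hwalkv : G.IsLazyWalk (l.map Prod.fst) := by
        rw [SimpleGraph.IsLazyWalk, List.Chain', List.isChain_map]
        refine hwalk.imp ?_
        intro a b hab
        rcases hab with heq | hadj
        · exact Or.inl (congrArg Prod.fst heq)
        · exact hadj.2.1
      have hrepv : ((l.map Prod.fst).map φ).take k = ((l.map Prod.fst).map φ).drop k := by
        rw [List.map_map]
        refine (take_drop_iff _ k (by simpa using hlen)).2 ?_
        intro i hik
        rw [List.getElem?_map, List.getElem?_map, List.getElem?_eq_getElem (by omega),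
          List.getElem?_eq_getElem (show i + k < l.length by omega)]
        simp only [Option.map_some, Function.comp]
        exact congrArg some (hpt i hik (by omega) (by omega)).1
      obtain ⟨i, hik, hieq⟩ := hφ (l.map Prod.fst) k hwalkv hk (by simpa using hlen) hrepv
      have hi1 : i < l.length := by omega
      have hi2 : i + k < l.length := by omega
      rw [List.getElem?_map, List.getElem?_map, List.getElem?_eq_getElem hi1,
        List.getElem?_eq_getElem hi2] at hieq
      simp only [Option.map_some] at hieq
      have hfst : (l[i]'hi1).1 = (l[i + k]'hi2).1 := Option.some.inj hieq
      have hsnd : (l[i]'hi1).2 = (l[i + k]'hi2).2 := by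
        have hv := hall i hik
        rw [hxe i hi1, hxe (i + k) hi2] at hv
        exact Fin.ext hv
      refine ⟨i, hik, ?_⟩
      rw [List.getElem?_eq_getElem hi1, List.getElem?_eq_getElem hi2]
      exact congrArg some (Prod.ext hfst hsnd)
    exact Nat.sInf_le hmem
end

section
/- For every graph G and every integer ℓ ≥ 1, π*(G ⊠ K_ℓ) ≤ ℓ·π*(G), where K_ℓ is the complete graph on ℓ vertices. -/
lemma take_drop_ptwise {α : Type*} (xs : List α) (k i : ℕ) (hik : i < k)
    (h : xs.take k = xs.drop k) : xs[i]? = xs[i + k]? := by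
  have h1 : (xs.take k)[i]? = xs[i]? := by rw [List.getElem?_take, if_pos hik]
  have h2 : (xs.drop k)[i]? = xs[k + i]? := List.getElem?_drop ..
  rw [← h1, h, h2, Nat.add_comm]

lemma injective_isStronglyNonrep {V : Type*} (G : SimpleGraph V) {α : Type*} (φ : V → α)
    (hφ : Function.Injective φ) : G.IsStronglyNonrepetitiveColouring φ := by
  intro l k _ hk hlen ht
  have h0 : 0 < l.length := by omega
  have hk2 : k < l.length := by omega
  refine ⟨0, hk, ?_⟩
  have := take_drop_ptwise (l.map φ) k 0 hk ht
  rw [List.getElem?_map, List.getElem?_map, Nat.zero_add,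
    List.getElem?_eq_getElem h0, List.getElem?_eq_getElem hk2] at this
  simp only [Option.map_some] at this
  rw [Nat.zero_add, List.getElem?_eq_getElem h0, List.getElem?_eq_getElem hk2]
  exact congrArg some (hφ (Option.some.inj this))

/-- **Corollary 8.** For every graph `G` and every `ℓ ≥ 1`,
`π*(G ⊠ Kₗ) ≤ ℓ · π*(G)`. -/
theorem strongNonrepChromNum_strongProd_completeGraph_le (V : Type) [Fintype V]
    (G : SimpleGraph V) (ℓ : ℕ) (hℓ : 1 ≤ ℓ) :
    (G.strongProd (⊤ : SimpleGraph (Fin ℓ))).strongNonrepChromNum ≤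
      ℓ * G.strongNonrepChromNum := by
  classical
  have hne : {n : ℕ | ∃ φ : V → Fin n, G.IsStronglyNonrepetitiveColouring φ}.Nonempty := by
    refine ⟨Fintype.card V, (Fintype.equivFin V : V ≃ Fin _), ?_⟩
    exact injective_isStronglyNonrep G _ (Fintype.equivFin V).injective
  set n := G.strongNonrepChromNum with hn
  have hmem : n ∈ {n : ℕ | ∃ φ : V → Fin n, G.IsStronglyNonrepetitiveColouring φ} :=
    Nat.sInf_mem hne
  obtain ⟨φ, hφ⟩ := hmem
  set e : Fin ℓ × Fin n ≃ Fin (ℓ * n) := finProdFinEquiv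
  set f : V × Fin ℓ → Fin ℓ × Fin n := fun p => (p.2, φ p.1) with hf
  set ψ : V × Fin ℓ → Fin (ℓ * n) := fun p => e (f p) with hψ
  apply Nat.sInf_le
  refine ⟨ψ, ?_⟩
  intro l k hwalk hk hlen ht
  have hmap : l.map ψ = (l.map f).map e := by rw [List.map_map]; rfl
  have htf : (l.map f).take k = (l.map f).drop k := by
    apply List.map_injective_iff.2 e.injective
    rw [List.map_take, List.map_drop, ← hmap]
    exact ht
  have hsnd : ∀ i < k, (l.map f)[i]? = (l.map f)[i + k]? := fun i hi =>
    take_drop_ptwise _ k i hi htf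
  have hwalk1 : G.IsLazyWalk (l.map Prod.fst) := by
    rw [SimpleGraph.IsLazyWalk, List.Chain', List.isChain_map]
    refine hwalk.imp ?_
    rintro a b (rfl | ⟨-, h2, -⟩)
    · exact Or.inl rfl
    · exact h2
  have hlen1 : (l.map Prod.fst).length = 2 * k := by simpa using hlen
  have htake1 : ((l.map Prod.fst).map φ).take k = ((l.map Prod.fst).map φ).drop k := by
    have hcomp : (l.map Prod.fst).map φ = (l.map f).map Prod.snd := by
      rw [List.map_map, List.map_map]; rfl
    rw [hcomp, ← List.map_take, ← List.map_drop, htf]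
  obtain ⟨i, hik, hi⟩ := hφ (l.map Prod.fst) k hwalk1 hk hlen1 htake1
  refine ⟨i, hik, ?_⟩
  have hi' : i < l.length := by omega
  have hik' : i + k < l.length := by omega
  have ha : l[i]? = some (l[i]'hi') := List.getElem?_eq_getElem hi'
  have hb : l[i + k]? = some (l[i + k]'hik') := List.getElem?_eq_getElem hik'
  rw [ha, hb]
  simp only [List.getElem?_map, ha, hb, Option.map_some] at hi
  have hsnd' := hsnd i hik
  simp only [List.getElem?_map, ha, hb, Option.map_some] at hsnd'
  have h1 : (l[i]'hi').1 = (l[i + k]'hik').1 := Option.some.inj hi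
  have h2 : f (l[i]'hi') = f (l[i + k]'hik') := Option.some.inj hsnd'
  have h3 : (l[i]'hi').2 = (l[i + k]'hik').2 := congrArg Prod.fst h2
  exact congrArg some (Prod.ext h1 h3)
end

section
/- For every graph G and every integer k ≥ 0, π*(G + K_k) = π*(G) + k, where G + K_k is the complete join of G with the complete graph on k vertices. -/
/-- The complete join `G + H` of two graphs: disjoint copies of `G` and `H` together with
all edges between them. -/
def SimpleGraph.graphJoin {α β : Type*} (G : SimpleGraph α) (H : SimpleGraph β) :
    SimpleGraph (α ⊕ β) where
  Adj x y :=
    match x, y with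
    | Sum.inl a, Sum.inl a' => G.Adj a a'
    | Sum.inr b, Sum.inr b' => H.Adj b b'
    | Sum.inl _, Sum.inr _ => True
    | Sum.inr _, Sum.inl _ => True
  symm := ⟨by
    rintro (a | b) (a' | b') h
    · exact h.symm
    · trivial
    · trivial
    · exact h.symm⟩
  loopless := ⟨by
    rintro (a | b) h
    · exact G.irrefl h
    · exact H.irrefl h⟩


private lemma take_drop_getElem? {α : Type*} {L : List α} {k i : ℕ}
    (h : L.take k = L.drop k) (hi : i < k) : L[i]? = L[i + k]? := by
  have h2 := congrArg (fun t => t[i]?) h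
  simpa [List.getElem?_take, List.getElem?_drop, hi, Nat.add_comm] using h2

private lemma take_eq_drop_of_pointwise {α : Type*} {L : List α} {k : ℕ}
    (hlen : L.length = 2 * k) (h : ∀ i < k, L[i]? = L[i + k]?) :
    L.take k = L.drop k := by
  apply List.ext_getElem?
  intro i
  rw [List.getElem?_take, List.getElem?_drop]
  by_cases hi : i < k
  · rw [if_pos hi, h i hi, Nat.add_comm]
  · rw [if_neg hi]
    symm
    apply List.getElem?_eq_none
    omega

private lemma snr_of_injective {V α : Type*} (G : SimpleGraph V) {φ : V → α}
    (hφ : Function.Injective φ) : G.IsStronglyNonrepetitiveColouring φ := by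
  intro l k _ hk hlen hrep
  refine ⟨0, hk, ?_⟩
  have h := take_drop_getElem? hrep hk
  rw [List.getElem?_map, List.getElem?_map] at h
  have h0 : 0 < l.length := by omega
  have hk2 : 0 + k < l.length := by omega
  rw [List.getElem?_eq_getElem h0, List.getElem?_eq_getElem hk2] at h ⊢
  simp only [Option.map_some] at h
  exact congrArg some (hφ (Option.some.inj h))

private lemma exists_map_inl {α β : Type*} : ∀ (l : List (α ⊕ β)),
    (∀ x ∈ l, ∃ a, x = Sum.inl a) → ∃ l' : List α, l = l'.map Sum.inl
  | [], _ => ⟨[], rfl⟩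
  | x :: l, h => by
      obtain ⟨a, rfl⟩ := h x List.mem_cons_self
      obtain ⟨t, rfl⟩ := exists_map_inl l (fun y hy => h y (List.mem_cons_of_mem _ hy))
      exact ⟨a :: t, rfl⟩

private lemma snr_set_nonempty {W : Type*} [Fintype W] (G : SimpleGraph W) :
    {n : ℕ | ∃ φ : W → Fin n, G.IsStronglyNonrepetitiveColouring φ}.Nonempty :=
  ⟨Fintype.card W, ⇑(Fintype.equivFin W), snr_of_injective G (Fintype.equivFin W).injective⟩

/-- For every graph `G` and every `k ≥ 0`, `π*(G + Kₖ) = π*(G) + k`, where `G + Kₖ`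
is the complete join of `G` with the complete graph on `k` vertices. -/
theorem strongNonrepChromNum_graphJoin_completeGraph (V : Type) [Fintype V]
    (G : SimpleGraph V) (k : ℕ) :
    (G.graphJoin (⊤ : SimpleGraph (Fin k))).strongNonrepChromNum =
      G.strongNonrepChromNum + k := by
  classical
  set J := G.graphJoin (⊤ : SimpleGraph (Fin k)) with hJ
  have hGne := snr_set_nonempty G
  have hJne := snr_set_nonempty J
  apply le_antisymm
  · -- upper bound
    set n := G.strongNonrepChromNum with hn
    have hmem : ∃ φ : V → Fin n, G.IsStronglyNonrepetitiveColouring φ := Nat.sInf_mem hGne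
    obtain ⟨φ, hφ⟩ := hmem
    set ψ : V ⊕ Fin k → Fin (n + k) :=
      Sum.elim (fun v => (φ v).castAdd k) (fun j => j.natAdd n) with hψdef
    have hψ : J.IsStronglyNonrepetitiveColouring ψ := by
      intro l m hwalk hm hlen hrep
      have key : ∀ i, i < m → (l[i]?).map ψ = (l[i + m]?).map ψ := by
        intro i hi
        have h := take_drop_getElem? hrep hi
        simpa [List.getElem?_map] using h
      have key' : ∀ i (hi : i < m),
          ψ (l[i]'(by omega)) = ψ (l[i + m]'(by omega)) := by
        intro i hi
        have h := key i hi
        rw [List.getElem?_eq_getElem (by omega), List.getElem?_eq_getElem (by omega)] at h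
        simpa using h
      by_cases hc : ∀ i (hi : i < m), ∃ a, l[i]'(by omega) = Sum.inl a
      · -- all entries are inl
        have hall : ∀ x ∈ l, ∃ a, x = Sum.inl a := by
          intro x hx
          obtain ⟨i, hilen, rfl⟩ := List.mem_iff_getElem.mp hx
          by_cases hi : i < m
          · exact hc i hi
          · have him : i - m < m := by omega
            have h := key' (i - m) him
            have hieq : i - m + m = i := by omega
            obtain ⟨a, ha⟩ := hc (i - m) him
            rw [ha] at h
            simp only [hieq] at h
            rcases hx2 : l[i]'(by omega) with a' | j
            · exact ⟨a', rfl⟩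
            · exfalso
              rw [hx2] at h
              have hv := congrArg Fin.val h
              simp [hψdef] at hv
              have := (φ a).isLt
              omega
        obtain ⟨l', rfl⟩ := exists_map_inl l hall
        have hwalk' : G.IsLazyWalk l' := by
          have h2 := (List.isChain_map Sum.inl).mp hwalk
          exact h2.imp (fun {a b} h => h.imp (fun hh => Sum.inl_injective hh) id)
        have hlen' : l'.length = 2 * m := by simpa using hlen
        have hrep' : (l'.map φ).take m = (l'.map φ).drop m := by
          have h1 : (l'.map Sum.inl).map ψ = (l'.map φ).map (Fin.castAdd k) := by
            simp [List.map_map, hψdef, Function.comp]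
          rw [h1, ← List.map_take, ← List.map_drop] at hrep
          have hinj : Function.Injective (Fin.castAdd k : Fin n → Fin (n + k)) := by
            intro a b h
            have := congrArg Fin.val h
            simpa [Fin.ext_iff] using this
          exact (List.map_injective_iff.mpr hinj) hrep
        obtain ⟨i, hi, hEq⟩ := hφ l' m hwalk' hm hlen' hrep'
        refine ⟨i, hi, ?_⟩
        simp only [List.getElem?_map, hEq]
      · push_neg at hc
        obtain ⟨i, hi, hnoinl⟩ := hc
        refine ⟨i, hi, ?_⟩
        have h := key' i hi
        rcases hx : l[i]'(by omega) with a | j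
        · exact absurd hx (hnoinl a)
        · rcases hy : l[i + m]'(by omega) with a' | j'
          · exfalso
            rw [hx, hy] at h
            have hv := congrArg Fin.val h
            simp [hψdef] at hv
            have := (φ a').isLt
            omega
          · rw [hx, hy] at h
            have hv := congrArg Fin.val h
            simp [hψdef] at hv
            rw [List.getElem?_eq_getElem (by omega), List.getElem?_eq_getElem (by omega),
              hx, hy]
            simp [Fin.ext_iff, hv]
    exact Nat.sInf_le ⟨ψ, hψ⟩
  · -- lower bound
    set m := J.strongNonrepChromNum with hm
    have hmem : ∃ ψ : V ⊕ Fin k → Fin m, J.IsStronglyNonrepetitiveColouring ψ :=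
      Nat.sInf_mem hJne
    obtain ⟨ψ, hψ⟩ := hmem
    have hadj : ∀ u v, J.Adj u v → ψ u ≠ ψ v := by
      intro u v huv hEq
      obtain ⟨i, hi, h⟩ := hψ [u, v] 1
        (by simp [SimpleGraph.IsLazyWalk, List.Chain', huv]) one_pos rfl (by simp [hEq])
      interval_cases i
      simp at h
      exact huv.ne h
    set S : Finset (Fin m) := Finset.univ.image (fun j : Fin k => ψ (Sum.inr j)) with hS
    have hinj : Function.Injective (fun j : Fin k => ψ (Sum.inr j)) := by
      intro j j' h
      by_contra hne
      exact hadj (Sum.inr j) (Sum.inr j') (by simp [hJ, SimpleGraph.graphJoin]; exact hne) h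
    have hcard : S.card = k := by
      rw [hS, Finset.card_image_of_injective _ hinj, Finset.card_univ, Fintype.card_fin]
    have hnotin : ∀ v : V, ψ (Sum.inl v) ∉ S := by
      intro v hv
      rw [hS, Finset.mem_image] at hv
      obtain ⟨j, _, hj⟩ := hv
      exact hadj (Sum.inl v) (Sum.inr j) (by trivial) hj.symm
    have hkm : k ≤ m := by
      have := Finset.card_le_univ S
      simpa [hcard] using this
    have hcompl : Fintype.card ↥(Sᶜ : Finset (Fin m)) = m - k := by
      simp [Finset.card_compl, hcard]
    let e : ↥(Sᶜ : Finset (Fin m)) ≃ Fin (m - k) := Fintype.equivFinOfCardEq hcompl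
    let φ : V → Fin (m - k) := fun v =>
      e ⟨ψ (Sum.inl v), by simp only [Finset.mem_compl]; exact hnotin v⟩
    have hφinj : ∀ v w : V, φ v = φ w → ψ (Sum.inl v) = ψ (Sum.inl w) := by
      intro v w h
      have := e.injective h
      exact congrArg Subtype.val this
    have hφ : G.IsStronglyNonrepetitiveColouring φ := by
      intro l' m' hwalk hm' hlen hrep
      have hwalkJ : J.IsLazyWalk (l'.map Sum.inl) := by
        rw [SimpleGraph.IsLazyWalk, List.Chain', List.isChain_map]
        exact hwalk.imp (fun {a b} h => h.imp (congrArg Sum.inl) id)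
      have hrepJ : ((l'.map Sum.inl).map ψ).take m' = ((l'.map Sum.inl).map ψ).drop m' := by
        apply take_eq_drop_of_pointwise (by simpa using hlen)
        intro i hi
        have h := take_drop_getElem? hrep hi
        rw [List.getElem?_map, List.getElem?_map,
          List.getElem?_eq_getElem (l := l') (by omega),
          List.getElem?_eq_getElem (l := l') (by omega)] at h
        simp only [Option.map_some] at h
        have h2 := hφinj _ _ (Option.some.inj h)
        simp only [List.map_map, List.getElem?_map,
          List.getElem?_eq_getElem (l := l') (show i < l'.length by omega),
          List.getElem?_eq_getElem (l := l') (show i + m' < l'.length by omega),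
          Option.map_some]
        exact congrArg some h2
      obtain ⟨i, hi, hEq⟩ := hψ _ m' hwalkJ hm' (by simpa using hlen) hrepJ
      refine ⟨i, hi, ?_⟩
      have := hEq
      simp only [List.getElem?_map] at this
      exact Option.map_injective Sum.inl_injective this
    have hle : G.strongNonrepChromNum ≤ m - k := Nat.sInf_le ⟨φ, hφ⟩
    omega
end

section
/- Let φ_1 be a strongly nonrepetitive colouring of a graph G and let φ_2 be an ℓ-colouring of a graph H such that every φ_2-repetitive lazy walk in H is boring. Then the product colouring φ of G ⊠ H defined by φ(u,v) = (φ_1(u), φ_2(v)) is a strongly nonrepetitive colouring of G ⊠ H. -/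
/-- Let `φ₁` be a strongly nonrepetitive colouring of a graph `G` and let `φ₂` be an
`ℓ`-colouring of a graph `H` such that every `φ₂`-repetitive lazy walk in `H` is boring.
Then the product colouring `(u, v) ↦ (φ₁ u, φ₂ v)` is a strongly nonrepetitive colouring
of `G ⊠ H`. -/
theorem isStronglyNonrepetitiveColouring_prod (V W α : Type) (G : SimpleGraph V)
    (H : SimpleGraph W) (φ₁ : V → α) (ℓ : ℕ) (φ₂ : W → Fin ℓ)
    (h₁ : G.IsStronglyNonrepetitiveColouring φ₁) (h₂ : H.LazyWalksBoring φ₂) :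
    (G.strongProd H).IsStronglyNonrepetitiveColouring (fun p => (φ₁ p.1, φ₂ p.2)) := by
  intro l k hwalk hk hlen hcol
  have hw1 : G.IsLazyWalk (l.map Prod.fst) := by
    rw [SimpleGraph.IsLazyWalk, List.Chain', List.isChain_map]
    exact hwalk.imp fun a b h =>
      h.elim (fun h => Or.inl (congrArg Prod.fst h)) (fun h => h.2.1)
  have hw2 : H.IsLazyWalk (l.map Prod.snd) := by
    rw [SimpleGraph.IsLazyWalk, List.Chain', List.isChain_map]
    exact hwalk.imp fun a b h =>
      h.elim (fun h => Or.inl (congrArg Prod.snd h)) (fun h => h.2.2)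
  have hc1 : ((l.map Prod.fst).map φ₁).take k = ((l.map Prod.fst).map φ₁).drop k := by
    have := congrArg (List.map Prod.fst) hcol
    simpa [List.map_take, List.map_drop, List.map_map, Function.comp_def] using this
  have hc2 : ((l.map Prod.snd).map φ₂).take k = ((l.map Prod.snd).map φ₂).drop k := by
    have := congrArg (List.map Prod.snd) hcol
    simpa [List.map_take, List.map_drop, List.map_map, Function.comp_def] using this
  obtain ⟨i, hik, hi⟩ := h₁ (l.map Prod.fst) k hw1 hk (by simp [hlen]) hc1
  have hi2 := h₂ (l.map Prod.snd) k hw2 (by simp [hlen]) hc2 i hik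
  refine ⟨i, hik, ?_⟩
  have hil : i < l.length := by omega
  have hikl : i + k < l.length := by omega
  rw [List.getElem?_map, List.getElem?_map, List.getElem?_eq_getElem hil,
    List.getElem?_eq_getElem hikl] at hi hi2
  simp only [Option.map_some] at hi hi2
  rw [List.getElem?_eq_getElem hil, List.getElem?_eq_getElem hikl]
  exact congrArg some (Prod.ext (Option.some.inj hi) (Option.some.inj hi2))
end
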